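/- Fix τ in the upper half-plane ℍ, λ ∈ {1,2,3}, a finite index set I, integers d, ℓ ≥ 1, and integers n_{α,i} (α ∈ I, 1 ≤ i ≤ d) and m_{α,j} (α ∈ I, 1 ≤ j ≤ ℓ). Suppose there is an integer s such that Σ_{j=1}^{ℓ} m_{α,j}² = s for every α ∈ I. Then the associated function L_λ satisfies L_λ(t + 2τ, τ) = exp(−4πi s (t + τ)) · L_λ(t, τ) for every t ∈ ℂ at which both sides are defined. In particular, if s = 0 then L_λ(t + 2τ, τ) = L_λ(t, τ). -/

import Mathlib

open Complex

/-- `qpow τ s = e^{2πisτ}`, i.e. "q^s" where `q = e^{2πiτ}`. -/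
noncomputable def qpow (τ s : ℂ) : ℂ := Complex.exp (2 * Real.pi * I * s * τ)

/-- `c(τ) = ∏_{r=1}^∞ (1 - q^r)`. -/
noncomputable def cInf (τ : ℂ) : ℂ := ∏' r : ℕ, (1 - qpow τ (r + 1))

/-- Jacobi theta function θ. -/
noncomputable def jTheta (v τ : ℂ) : ℂ :=
  cInf τ * qpow τ (1 / 8) * (2 * Complex.sin (Real.pi * v)) *
    ∏' r : ℕ, ((1 - qpow τ (r + 1) * Complex.exp (2 * Real.pi * I * v)) *
      (1 - qpow τ (r + 1) * Complex.exp (-(2 * Real.pi * I * v))))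

/-- Jacobi theta function θ₁. -/
noncomputable def jTheta1 (v τ : ℂ) : ℂ :=
  cInf τ * qpow τ (1 / 8) * (2 * Complex.cos (Real.pi * v)) *
    ∏' r : ℕ, ((1 + qpow τ (r + 1) * Complex.exp (2 * Real.pi * I * v)) *
      (1 + qpow τ (r + 1) * Complex.exp (-(2 * Real.pi * I * v))))

/-- Jacobi theta function θ₂. -/
noncomputable def jTheta2 (v τ : ℂ) : ℂ :=
  cInf τ *
    ∏' r : ℕ, ((1 - qpow τ ((r : ℂ) + 1 / 2) * Complex.exp (2 * Real.pi * I * v)) *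
      (1 - qpow τ ((r : ℂ) + 1 / 2) * Complex.exp (-(2 * Real.pi * I * v))))

/-- Jacobi theta function θ₃. -/
noncomputable def jTheta3 (v τ : ℂ) : ℂ :=
  cInf τ *
    ∏' r : ℕ, ((1 + qpow τ ((r : ℂ) + 1 / 2) * Complex.exp (2 * Real.pi * I * v)) *
      (1 + qpow τ ((r : ℂ) + 1 / 2) * Complex.exp (-(2 * Real.pi * I * v))))

/-- θ'(0,τ), the derivative of `v ↦ θ(v,τ)` at `v = 0`. -/
noncomputable def jThetaDeriv (τ : ℂ) : ℂ := deriv (fun v => jTheta v τ) 0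

/-- The family (θ₁, θ₂, θ₃). -/
noncomputable def thetaFam : Fin 3 → ℂ → ℂ → ℂ := ![jTheta1, jTheta2, jTheta3]

/-- The Lefschetz-number-type function L_λ. -/
noncomputable def Lfun {ι : Type*} [Fintype ι] {d ℓ : ℕ}
    (n : ι → Fin d → ℤ) (m : ι → Fin ℓ → ℤ) (lam : Fin 3) (t τ : ℂ) : ℂ :=
  ∑ α : ι,
    (∑ μ : Fin 3, ∏ i : Fin d,
        jThetaDeriv τ * thetaFam μ ((n α i : ℂ) * t) τ /
          (jTheta ((n α i : ℂ) * t) τ * thetaFam μ 0 τ)) *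
      ∏ j : Fin ℓ, thetaFam lam ((m α j : ℂ) * t) τ / thetaFam lam 0 τ


private lemma hasProd_zero_of_factor_zero {f : ℕ → ℂ} {i : ℕ} (h : f i = 0) :
    HasProd f 0 := by
  apply tendsto_const_nhds.congr'
  filter_upwards [Filter.eventually_ge_atTop ({i} : Finset ℕ)] with s hs
  exact (Finset.prod_eq_zero (hs (Finset.mem_singleton_self i)) h).symm

private lemma multipliable_one_add {q : ℂ} (hq : ‖q‖ < 1) (w : ℂ) :
    Multipliable (fun r : ℕ => 1 + w * q ^ r) := by
  by_cases hz : ∃ r : ℕ, 1 + w * q ^ r = 0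
  · obtain ⟨r, hr⟩ := hz
    exact ⟨0, hasProd_zero_of_factor_zero hr⟩
  · push_neg at hz
    have hsum : Summable fun r : ℕ => Complex.log (1 + w * q ^ r) := by
      have hgeo : Summable fun r : ℕ => (3 / 2 : ℝ) * (‖w‖ * ‖q‖ ^ r) :=
        ((summable_geometric_of_lt_one (norm_nonneg q) hq).mul_left ‖w‖).mul_left _
      refine hgeo.of_norm_bounded_eventually_nat ?_
      have h0 : Filter.Tendsto (fun r : ℕ => ‖w‖ * ‖q‖ ^ r) Filter.atTop (nhds 0) := by
        simpa using (tendsto_pow_atTop_nhds_zero_of_lt_one (norm_nonneg q) hq).const_mul ‖w‖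
      filter_upwards [h0.eventually_le_const (by norm_num : (0 : ℝ) < 1 / 2)] with r hr
      have hb : ‖w * q ^ r‖ ≤ 1 / 2 := by rw [norm_mul, norm_pow]; exact hr
      calc ‖Complex.log (1 + w * q ^ r)‖ ≤ 3 / 2 * ‖w * q ^ r‖ :=
            Complex.norm_log_one_add_half_le_self hb
        _ = 3 / 2 * (‖w‖ * ‖q‖ ^ r) := by rw [norm_mul, norm_pow]
    exact Complex.multipliable_of_summable_log hsum

private lemma tprod_peel {q : ℂ} (hq : ‖q‖ < 1) (w : ℂ) :
    ∏' r : ℕ, (1 + w * q ^ r) = (1 + w) * ∏' r : ℕ, (1 + w * q * q ^ r) := by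
  rw [tprod_eq_zero_mul' (f := fun r : ℕ => 1 + w * q ^ r)
    ((multipliable_one_add hq (w * q)).congr (fun b => show 1 + w * q * q ^ b = 1 + w * q ^ (b + 1) by rw [pow_succ]; ring)),
    pow_zero, mul_one]
  congr 1
  exact tprod_congr fun b => show 1 + w * q ^ (b + 1) = 1 + w * q * q ^ b by rw [pow_succ]; ring

private lemma peel_split {q : ℂ} (hq : ‖q‖ < 1) (a b : ℂ) :
    (1 + a) * ∏' r : ℕ, ((1 + a * q * q ^ r) * (1 + b * q ^ r)) =
      (1 + b) * ∏' r : ℕ, ((1 + a * q ^ r) * (1 + b * q * q ^ r)) := by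
  rw [Multipliable.tprod_mul (multipliable_one_add hq (a * q)) (multipliable_one_add hq b),
    Multipliable.tprod_mul (multipliable_one_add hq a) (multipliable_one_add hq (b * q)),
    tprod_peel hq a, tprod_peel hq b]
  ring

private lemma norm_Q_lt_one {τ : ℂ} (hτ : 0 < τ.im) :
    ‖Complex.exp (2 * Real.pi * I * τ)‖ < 1 := by
  rw [Complex.norm_exp, Real.exp_lt_one_iff]
  have h : (2 * (Real.pi : ℂ) * I * τ).re = -(2 * Real.pi * τ.im) := by
    simp [Complex.mul_re, Complex.mul_im]
  rw [h]
  nlinarith [Real.pi_pos, hτ]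

private lemma qpow_nat_succ (τ : ℂ) (r : ℕ) :
    qpow τ ((r : ℂ) + 1) =
      Complex.exp (2 * Real.pi * I * τ) * Complex.exp (2 * Real.pi * I * τ) ^ r := by
  rw [qpow, ← Complex.exp_nat_mul, ← Complex.exp_add]
  congr 1
  ring

private lemma qpow_nat_half (τ : ℂ) (r : ℕ) :
    qpow τ ((r : ℂ) + 1 / 2) =
      Complex.exp (Real.pi * I * τ) * Complex.exp (2 * Real.pi * I * τ) ^ r := by
  rw [qpow, ← Complex.exp_nat_mul, ← Complex.exp_add]
  congr 1
  ring

private lemma two_sin_eq (v : ℂ) :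
    2 * Complex.sin ((Real.pi : ℂ) * v) =
      -I * Complex.exp (Real.pi * I * v) * (1 - Complex.exp (-(2 * Real.pi * I * v))) := by
  have h2 : Complex.exp (Real.pi * I * v) * Complex.exp (-(Real.pi * I * v)) = 1 := by
    rw [← Complex.exp_add]; simp
  have h3 : Complex.exp (-(2 * Real.pi * I * v)) =
      Complex.exp (-(Real.pi * I * v)) * Complex.exp (-(Real.pi * I * v)) := by
    rw [← Complex.exp_add]; congr 1; ring
  have e1 : Complex.exp (-((Real.pi : ℂ) * v) * I) = Complex.exp (-(Real.pi * I * v)) := by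
    congr 1; ring
  have e2 : Complex.exp (((Real.pi : ℂ) * v) * I) = Complex.exp (Real.pi * I * v) := by
    congr 1; ring
  rw [Complex.sin, h3, e1, e2]
  linear_combination (-(I * Complex.exp (-(Real.pi * I * v)))) * h2

private lemma two_cos_eq (v : ℂ) :
    2 * Complex.cos ((Real.pi : ℂ) * v) =
      Complex.exp (Real.pi * I * v) * (1 + Complex.exp (-(2 * Real.pi * I * v))) := by
  have h2 : Complex.exp (Real.pi * I * v) * Complex.exp (-(Real.pi * I * v)) = 1 := by
    rw [← Complex.exp_add]; simp
  have h3 : Complex.exp (-(2 * Real.pi * I * v)) =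
      Complex.exp (-(Real.pi * I * v)) * Complex.exp (-(Real.pi * I * v)) := by
    rw [← Complex.exp_add]; congr 1; ring
  have e1 : Complex.exp (-((Real.pi : ℂ) * v) * I) = Complex.exp (-(Real.pi * I * v)) := by
    congr 1; ring
  have e2 : Complex.exp (((Real.pi : ℂ) * v) * I) = Complex.exp (Real.pi * I * v) := by
    congr 1; ring
  rw [Complex.cos, h3, e1, e2]
  linear_combination (-(Complex.exp (-(Real.pi * I * v)))) * h2
private lemma jTheta_add_tau {τ : ℂ} (hτ : 0 < τ.im) (v : ℂ) :
    jTheta (v + τ) τ =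
      -(Complex.exp (-(Real.pi * I * τ)) * Complex.exp (-(2 * Real.pi * I * v))) *
        jTheta v τ := by
  have hQ : ‖Complex.exp (2 * Real.pi * I * τ)‖ < 1 := norm_Q_lt_one hτ
  unfold jTheta
  set Q : ℂ := Complex.exp (2 * Real.pi * I * τ) with hQdef
  set Qi : ℂ := Complex.exp (-(2 * Real.pi * I * τ)) with hQidef
  set x : ℂ := Complex.exp (2 * Real.pi * I * v) with hxdef
  set xi : ℂ := Complex.exp (-(2 * Real.pi * I * v)) with hxidef
  set h : ℂ := Complex.exp (Real.pi * I * τ) with hhdef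
  set hi : ℂ := Complex.exp (-(Real.pi * I * τ)) with hhidef
  set E : ℂ := Complex.exp (Real.pi * I * v) with hEdef
  have hQQi : Q * Qi = 1 := by rw [hQdef, hQidef, ← Complex.exp_add]; simp
  have hxxi : x * xi = 1 := by rw [hxdef, hxidef, ← Complex.exp_add]; simp
  have hhhi : h * hi = 1 := by rw [hhdef, hhidef, ← Complex.exp_add]; simp
  have hhh : h * h = Q := by rw [hhdef, hQdef, ← Complex.exp_add]; congr 1; ring
  have e6 : h * Qi = hi := by
    linear_combination hi * hQQi + Qi * hi * hhh - h * Qi * hhhi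
  have e8 : hi * Q = h := by linear_combination h * hhhi - hi * hhh
  have hxv : Complex.exp (2 * Real.pi * I * (v + τ)) = Q * x := by
    rw [hQdef, hxdef, ← Complex.exp_add]; congr 1; ring
  have hxiv : Complex.exp (-(2 * Real.pi * I * (v + τ))) = Qi * xi := by
    rw [hQidef, hxidef, ← Complex.exp_add]; congr 1; ring
  have hEv : Complex.exp (Real.pi * I * (v + τ)) = E * h := by
    rw [hEdef, hhdef, ← Complex.exp_add]; congr 1; ring
  rw [two_sin_eq (v + τ), two_sin_eq v, hEv, hxiv, hxv, ← hEdef, ← hxidef]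
  have hS : (∏' r : ℕ, ((1 - qpow τ ((r : ℂ) + 1) * (Q * x)) *
      (1 - qpow τ ((r : ℂ) + 1) * (Qi * xi)))) =
      ∏' r : ℕ, ((1 + -(Q * x) * Q * Q ^ r) * (1 + -xi * Q ^ r)) :=
    tprod_congr fun r => by
      rw [qpow_nat_succ, ← hQdef]
      linear_combination (-(xi * Q ^ r * (1 + -(Q * x) * Q * Q ^ r))) * hQQi
  have hT : (∏' r : ℕ, ((1 - qpow τ ((r : ℂ) + 1) * x) *
      (1 - qpow τ ((r : ℂ) + 1) * xi))) =
      ∏' r : ℕ, ((1 + -(Q * x) * Q ^ r) * (1 + -xi * Q * Q ^ r)) :=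
    tprod_congr fun r => by rw [qpow_nat_succ, ← hQdef]; ring
  rw [hS, hT]
  have key := peel_split hQ (-(Q * x)) (-xi)
  have e9 : h * (1 - Qi * xi) = -(hi * xi) * (1 + -(Q * x)) := by
    linear_combination (-xi) * e6 - h * hxxi - (x * xi) * e8
  calc cInf τ * qpow τ (1 / 8) * (-I * (E * h) * (1 - Qi * xi)) *
        ∏' r : ℕ, ((1 + -(Q * x) * Q * Q ^ r) * (1 + -xi * Q ^ r))
      = cInf τ * qpow τ (1 / 8) * (-I * E) * (h * (1 - Qi * xi)) *
        ∏' r : ℕ, ((1 + -(Q * x) * Q * Q ^ r) * (1 + -xi * Q ^ r)) := by ring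
    _ = cInf τ * qpow τ (1 / 8) * (-I * E) * -(hi * xi) * ((1 + -(Q * x)) *
        ∏' r : ℕ, ((1 + -(Q * x) * Q * Q ^ r) * (1 + -xi * Q ^ r))) := by rw [e9]; ring
    _ = cInf τ * qpow τ (1 / 8) * (-I * E) * -(hi * xi) * ((1 + -xi) *
        ∏' r : ℕ, ((1 + -(Q * x) * Q ^ r) * (1 + -xi * Q * Q ^ r))) := by rw [key]
    _ = -(hi * xi) * (cInf τ * qpow τ (1 / 8) * (-I * E * (1 - xi)) *
        ∏' r : ℕ, ((1 + -(Q * x) * Q ^ r) * (1 + -xi * Q * Q ^ r))) := by ring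
private lemma jTheta1_add_tau {τ : ℂ} (hτ : 0 < τ.im) (v : ℂ) :
    jTheta1 (v + τ) τ =
      (Complex.exp (-(Real.pi * I * τ)) * Complex.exp (-(2 * Real.pi * I * v))) *
        jTheta1 v τ := by
  have hQ : ‖Complex.exp (2 * Real.pi * I * τ)‖ < 1 := norm_Q_lt_one hτ
  unfold jTheta1
  set Q : ℂ := Complex.exp (2 * Real.pi * I * τ) with hQdef
  set Qi : ℂ := Complex.exp (-(2 * Real.pi * I * τ)) with hQidef
  set x : ℂ := Complex.exp (2 * Real.pi * I * v) with hxdef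
  set xi : ℂ := Complex.exp (-(2 * Real.pi * I * v)) with hxidef
  set h : ℂ := Complex.exp (Real.pi * I * τ) with hhdef
  set hi : ℂ := Complex.exp (-(Real.pi * I * τ)) with hhidef
  set E : ℂ := Complex.exp (Real.pi * I * v) with hEdef
  have hQQi : Q * Qi = 1 := by rw [hQdef, hQidef, ← Complex.exp_add]; simp
  have hxxi : x * xi = 1 := by rw [hxdef, hxidef, ← Complex.exp_add]; simp
  have hhhi : h * hi = 1 := by rw [hhdef, hhidef, ← Complex.exp_add]; simp
  have hhh : h * h = Q := by rw [hhdef, hQdef, ← Complex.exp_add]; congr 1; ring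
  have e6 : h * Qi = hi := by
    linear_combination hi * hQQi + Qi * hi * hhh - h * Qi * hhhi
  have e8 : hi * Q = h := by linear_combination h * hhhi - hi * hhh
  have hxv : Complex.exp (2 * Real.pi * I * (v + τ)) = Q * x := by
    rw [hQdef, hxdef, ← Complex.exp_add]; congr 1; ring
  have hxiv : Complex.exp (-(2 * Real.pi * I * (v + τ))) = Qi * xi := by
    rw [hQidef, hxidef, ← Complex.exp_add]; congr 1; ring
  have hEv : Complex.exp (Real.pi * I * (v + τ)) = E * h := by
    rw [hEdef, hhdef, ← Complex.exp_add]; congr 1; ring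
  rw [two_cos_eq (v + τ), two_cos_eq v, hEv, hxiv, hxv, ← hEdef, ← hxidef]
  have hS : (∏' r : ℕ, ((1 + qpow τ ((r : ℂ) + 1) * (Q * x)) *
      (1 + qpow τ ((r : ℂ) + 1) * (Qi * xi)))) =
      ∏' r : ℕ, ((1 + (Q * x) * Q * Q ^ r) * (1 + xi * Q ^ r)) :=
    tprod_congr fun r => by
      rw [qpow_nat_succ, ← hQdef]
      linear_combination ((xi * Q ^ r * (1 + (Q * x) * Q * Q ^ r))) * hQQi
  have hT : (∏' r : ℕ, ((1 + qpow τ ((r : ℂ) + 1) * x) *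
      (1 + qpow τ ((r : ℂ) + 1) * xi))) =
      ∏' r : ℕ, ((1 + (Q * x) * Q ^ r) * (1 + xi * Q * Q ^ r)) :=
    tprod_congr fun r => by rw [qpow_nat_succ, ← hQdef]; ring
  rw [hS, hT]
  have key := peel_split hQ (Q * x) xi
  have e9 : h * (1 + Qi * xi) = (hi * xi) * (1 + Q * x) := by
    linear_combination xi * e6 - h * hxxi - (x * xi) * e8
  calc cInf τ * qpow τ (1 / 8) * (E * h * (1 + Qi * xi)) *
        ∏' r : ℕ, ((1 + (Q * x) * Q * Q ^ r) * (1 + xi * Q ^ r))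
      = cInf τ * qpow τ (1 / 8) * E * (h * (1 + Qi * xi)) *
        ∏' r : ℕ, ((1 + (Q * x) * Q * Q ^ r) * (1 + xi * Q ^ r)) := by ring
    _ = cInf τ * qpow τ (1 / 8) * E * (hi * xi) * ((1 + Q * x) *
        ∏' r : ℕ, ((1 + (Q * x) * Q * Q ^ r) * (1 + xi * Q ^ r))) := by rw [e9]; ring
    _ = cInf τ * qpow τ (1 / 8) * E * (hi * xi) * ((1 + xi) *
        ∏' r : ℕ, ((1 + (Q * x) * Q ^ r) * (1 + xi * Q * Q ^ r))) := by rw [key]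
    _ = (hi * xi) * (cInf τ * qpow τ (1 / 8) * (E * (1 + xi)) *
        ∏' r : ℕ, ((1 + (Q * x) * Q ^ r) * (1 + xi * Q * Q ^ r))) := by ring

private lemma jTheta2_add_tau {τ : ℂ} (hτ : 0 < τ.im) (v : ℂ) :
    jTheta2 (v + τ) τ =
      -(Complex.exp (-(Real.pi * I * τ)) * Complex.exp (-(2 * Real.pi * I * v))) *
        jTheta2 v τ := by
  have hQ : ‖Complex.exp (2 * Real.pi * I * τ)‖ < 1 := norm_Q_lt_one hτ
  unfold jTheta2
  set Q : ℂ := Complex.exp (2 * Real.pi * I * τ) with hQdef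
  set Qi : ℂ := Complex.exp (-(2 * Real.pi * I * τ)) with hQidef
  set x : ℂ := Complex.exp (2 * Real.pi * I * v) with hxdef
  set xi : ℂ := Complex.exp (-(2 * Real.pi * I * v)) with hxidef
  set h : ℂ := Complex.exp (Real.pi * I * τ) with hhdef
  set hi : ℂ := Complex.exp (-(Real.pi * I * τ)) with hhidef
  have hQQi : Q * Qi = 1 := by rw [hQdef, hQidef, ← Complex.exp_add]; simp
  have hxxi : x * xi = 1 := by rw [hxdef, hxidef, ← Complex.exp_add]; simp
  have hhhi : h * hi = 1 := by rw [hhdef, hhidef, ← Complex.exp_add]; simp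
  have hhh : h * h = Q := by rw [hhdef, hQdef, ← Complex.exp_add]; congr 1; ring
  have e6 : h * Qi = hi := by
    linear_combination hi * hQQi + Qi * hi * hhh - h * Qi * hhhi
  have e8 : hi * Q = h := by linear_combination h * hhhi - hi * hhh
  have hxv : Complex.exp (2 * Real.pi * I * (v + τ)) = Q * x := by
    rw [hQdef, hxdef, ← Complex.exp_add]; congr 1; ring
  have hxiv : Complex.exp (-(2 * Real.pi * I * (v + τ))) = Qi * xi := by
    rw [hQidef, hxidef, ← Complex.exp_add]; congr 1; ring
  rw [hxiv, hxv]
  have hS : (∏' r : ℕ, ((1 - qpow τ ((r : ℂ) + 1 / 2) * (Q * x)) *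
      (1 - qpow τ ((r : ℂ) + 1 / 2) * (Qi * xi)))) =
      ∏' r : ℕ, ((1 + -(h * x) * Q * Q ^ r) * (1 + -(hi * xi) * Q ^ r)) :=
    tprod_congr fun r => by
      rw [qpow_nat_half, ← hQdef, ← hhdef]
      linear_combination (-(xi * Q ^ r * (1 + -(h * x) * Q * Q ^ r))) * e6
  have hT : (∏' r : ℕ, ((1 - qpow τ ((r : ℂ) + 1 / 2) * x) *
      (1 - qpow τ ((r : ℂ) + 1 / 2) * xi))) =
      ∏' r : ℕ, ((1 + -(h * x) * Q ^ r) * (1 + -(hi * xi) * Q * Q ^ r)) :=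
    tprod_congr fun r => by
      rw [qpow_nat_half, ← hQdef, ← hhdef]
      linear_combination ((xi * Q ^ r * (1 + -(h * x) * Q ^ r))) * e8
  rw [hS, hT]
  have key := peel_split hQ (-(h * x)) (-(hi * xi))
  set S2 := ∏' r : ℕ, ((1 + -(h * x) * Q * Q ^ r) * (1 + -(hi * xi) * Q ^ r)) with hS2def
  set T2 := ∏' r : ℕ, ((1 + -(h * x) * Q ^ r) * (1 + -(hi * xi) * Q * Q ^ r)) with hT2def
  by_cases hD : (1 + -(h * x) : ℂ) = 0
  · have hx1 : h * x = 1 := by linear_combination -hD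
    have hhixi : hi * xi = 1 := by
      linear_combination (x * xi) * hhhi + hxxi + (-(hi * xi)) * hx1
    have hSz : S2 = 0 := by
      rw [hS2def]
      refine HasProd.tprod_eq (hasProd_zero_of_factor_zero (i := 0) ?_)
      show (1 + -(h * x) * Q * Q ^ (0 : ℕ)) * (1 + -(hi * xi) * Q ^ (0 : ℕ)) = 0
      refine mul_eq_zero_of_right _ ?_
      rw [pow_zero, mul_one]
      linear_combination -hhixi
    have hTz : T2 = 0 := by
      rw [hT2def]
      refine HasProd.tprod_eq (hasProd_zero_of_factor_zero (i := 0) ?_)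
      show (1 + -(h * x) * Q ^ (0 : ℕ)) * (1 + -(hi * xi) * Q * Q ^ (0 : ℕ)) = 0
      refine mul_eq_zero_of_left ?_ _
      rw [pow_zero, mul_one]
      exact hD
    rw [hSz, hTz]; ring
  · have e10 : (1 : ℂ) + -(hi * xi) = -(hi * xi) * (1 + -(h * x)) := by
      linear_combination (-(x * xi)) * hhhi - hxxi
    have hST : S2 = -(hi * xi) * T2 := by
      apply mul_left_cancel₀ hD
      rw [key]
      linear_combination T2 * e10
    rw [hST]; ring

private lemma jTheta3_add_tau {τ : ℂ} (hτ : 0 < τ.im) (v : ℂ) :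
    jTheta3 (v + τ) τ =
      (Complex.exp (-(Real.pi * I * τ)) * Complex.exp (-(2 * Real.pi * I * v))) *
        jTheta3 v τ := by
  have hQ : ‖Complex.exp (2 * Real.pi * I * τ)‖ < 1 := norm_Q_lt_one hτ
  unfold jTheta3
  set Q : ℂ := Complex.exp (2 * Real.pi * I * τ) with hQdef
  set Qi : ℂ := Complex.exp (-(2 * Real.pi * I * τ)) with hQidef
  set x : ℂ := Complex.exp (2 * Real.pi * I * v) with hxdef
  set xi : ℂ := Complex.exp (-(2 * Real.pi * I * v)) with hxidef
  set h : ℂ := Complex.exp (Real.pi * I * τ) with hhdef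
  set hi : ℂ := Complex.exp (-(Real.pi * I * τ)) with hhidef
  have hQQi : Q * Qi = 1 := by rw [hQdef, hQidef, ← Complex.exp_add]; simp
  have hxxi : x * xi = 1 := by rw [hxdef, hxidef, ← Complex.exp_add]; simp
  have hhhi : h * hi = 1 := by rw [hhdef, hhidef, ← Complex.exp_add]; simp
  have hhh : h * h = Q := by rw [hhdef, hQdef, ← Complex.exp_add]; congr 1; ring
  have e6 : h * Qi = hi := by
    linear_combination hi * hQQi + Qi * hi * hhh - h * Qi * hhhi
  have e8 : hi * Q = h := by linear_combination h * hhhi - hi * hhh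
  have hxv : Complex.exp (2 * Real.pi * I * (v + τ)) = Q * x := by
    rw [hQdef, hxdef, ← Complex.exp_add]; congr 1; ring
  have hxiv : Complex.exp (-(2 * Real.pi * I * (v + τ))) = Qi * xi := by
    rw [hQidef, hxidef, ← Complex.exp_add]; congr 1; ring
  rw [hxiv, hxv]
  have hS : (∏' r : ℕ, ((1 + qpow τ ((r : ℂ) + 1 / 2) * (Q * x)) *
      (1 + qpow τ ((r : ℂ) + 1 / 2) * (Qi * xi)))) =
      ∏' r : ℕ, ((1 + (h * x) * Q * Q ^ r) * (1 + (hi * xi) * Q ^ r)) :=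
    tprod_congr fun r => by
      rw [qpow_nat_half, ← hQdef, ← hhdef]
      linear_combination ((xi * Q ^ r * (1 + (h * x) * Q * Q ^ r))) * e6
  have hT : (∏' r : ℕ, ((1 + qpow τ ((r : ℂ) + 1 / 2) * x) *
      (1 + qpow τ ((r : ℂ) + 1 / 2) * xi))) =
      ∏' r : ℕ, ((1 + (h * x) * Q ^ r) * (1 + (hi * xi) * Q * Q ^ r)) :=
    tprod_congr fun r => by
      rw [qpow_nat_half, ← hQdef, ← hhdef]
      linear_combination (-(xi * Q ^ r * (1 + (h * x) * Q ^ r))) * e8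
  rw [hS, hT]
  have key := peel_split hQ (h * x) (hi * xi)
  set S3 := ∏' r : ℕ, ((1 + (h * x) * Q * Q ^ r) * (1 + (hi * xi) * Q ^ r)) with hS3def
  set T3 := ∏' r : ℕ, ((1 + (h * x) * Q ^ r) * (1 + (hi * xi) * Q * Q ^ r)) with hT3def
  by_cases hD : (1 + h * x : ℂ) = 0
  · have hx1 : h * x = -1 := by linear_combination hD
    have hhixi : hi * xi = -1 := by
      linear_combination hi * xi * hx1 - (x * xi) * hhhi - hxxi
    have hSz : S3 = 0 := by
      rw [hS3def]
      refine HasProd.tprod_eq (hasProd_zero_of_factor_zero (i := 0) ?_)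
      show (1 + (h * x) * Q * Q ^ (0 : ℕ)) * (1 + (hi * xi) * Q ^ (0 : ℕ)) = 0
      refine mul_eq_zero_of_right _ ?_
      rw [pow_zero, mul_one]
      linear_combination hhixi
    have hTz : T3 = 0 := by
      rw [hT3def]
      refine HasProd.tprod_eq (hasProd_zero_of_factor_zero (i := 0) ?_)
      show (1 + (h * x) * Q ^ (0 : ℕ)) * (1 + (hi * xi) * Q * Q ^ (0 : ℕ)) = 0
      refine mul_eq_zero_of_left ?_ _
      rw [pow_zero, mul_one]
      exact hD
    rw [hSz, hTz]; ring
  · have e10 : (1 : ℂ) + hi * xi = (hi * xi) * (1 + h * x) := by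
      linear_combination (-(x * xi)) * hhhi - hxxi
    have hST : S3 = (hi * xi) * T3 := by
      apply mul_left_cancel₀ hD
      rw [key]
      linear_combination T3 * e10
    rw [hST]; ring
private lemma mul_step_helper {τ : ℂ} {f : ℂ → ℂ} (v : ℂ) (ε : ℂ) (hε : ε = 1 ∨ ε = -1)
    (hf : ∀ w : ℂ, f (w + τ) =
      ε * (Complex.exp (-(Real.pi * I * τ)) * Complex.exp (-(2 * Real.pi * I * w))) * f w) :
    f (v + 2 * τ) = Complex.exp (-(4 * Real.pi * I) * (v + τ)) * f v := by
  have h1 := hf (v + τ)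
  have h2 := hf v
  have harg : v + 2 * τ = v + τ + τ := by ring
  rw [harg, h1, h2]
  have hεε : ε * ε = 1 := by rcases hε with h | h <;> rw [h] <;> ring
  have hE : Complex.exp (-(Real.pi * I * τ)) * Complex.exp (-(2 * Real.pi * I * (v + τ))) *
      (Complex.exp (-(Real.pi * I * τ)) * Complex.exp (-(2 * Real.pi * I * v))) =
      Complex.exp (-(4 * Real.pi * I) * (v + τ)) := by
    rw [← Complex.exp_add, ← Complex.exp_add, ← Complex.exp_add]
    congr 1
    ring
  calc ε * (Complex.exp (-(Real.pi * I * τ)) * Complex.exp (-(2 * Real.pi * I * (v + τ)))) *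
        (ε * (Complex.exp (-(Real.pi * I * τ)) * Complex.exp (-(2 * Real.pi * I * v))) * f v)
      = (ε * ε) * ((Complex.exp (-(Real.pi * I * τ)) * Complex.exp (-(2 * Real.pi * I * (v + τ))) *
          (Complex.exp (-(Real.pi * I * τ)) * Complex.exp (-(2 * Real.pi * I * v)))) * f v) := by
        ring
    _ = Complex.exp (-(4 * Real.pi * I) * (v + τ)) * f v := by rw [hεε, hE]; ring

private lemma shift_induct {τ : ℂ} {f : ℂ → ℂ}
    (hf : ∀ v : ℂ, f (v + 2 * τ) = Complex.exp (-(4 * Real.pi * I) * (v + τ)) * f v) :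
    ∀ (k : ℤ) (v : ℂ), f (v + 2 * (k : ℂ) * τ) =
      Complex.exp (-(4 * Real.pi * I) * ((k : ℂ) * v + (k : ℂ) ^ 2 * τ)) * f v := by
  intro k
  induction k using Int.induction_on with
  | zero => intro v; simp
  | succ k ih =>
    intro v
    push_cast
    have harg : v + 2 * ((k : ℂ) + 1) * τ = v + 2 * τ + 2 * (k : ℂ) * τ := by ring
    rw [harg]
    have h2 : f (v + 2 * τ + 2 * (k : ℂ) * τ) =
        Complex.exp (-(4 * Real.pi * I) * ((k : ℂ) * (v + 2 * τ) + (k : ℂ) ^ 2 * τ)) *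
          f (v + 2 * τ) := ih (v + 2 * τ)
    rw [h2, hf v, ← mul_assoc, ← Complex.exp_add]
    have : -(4 * (Real.pi : ℂ) * I) * ((k : ℂ) * (v + 2 * τ) + (k : ℂ) ^ 2 * τ) +
        -(4 * Real.pi * I) * (v + τ) =
        -(4 * Real.pi * I) * (((k : ℂ) + 1) * v + ((k : ℂ) + 1) ^ 2 * τ) := by ring
    rw [this]
  | pred k ih =>
    intro v
    push_cast
    have hfv : f (v - 2 * τ) = Complex.exp ((4 * Real.pi * I) * (v - τ)) * f v := by
      have h1 := hf (v - 2 * τ)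
      rw [show v - 2 * τ + 2 * τ = v by ring] at h1
      rw [h1, ← mul_assoc, ← Complex.exp_add,
        show (4 * (Real.pi : ℂ) * I) * (v - τ) + -(4 * Real.pi * I) * (v - 2 * τ + τ) = 0 by ring,
        Complex.exp_zero, one_mul]
    have harg : v + 2 * (-(k : ℂ) - 1) * τ = v - 2 * τ + 2 * (-(k : ℂ)) * τ := by ring
    rw [harg]
    have h2 := ih (v - 2 * τ)
    push_cast at h2
    rw [h2, hfv, ← mul_assoc, ← Complex.exp_add]
    have : -(4 * (Real.pi : ℂ) * I) * (-(k : ℂ) * (v - 2 * τ) + (-(k : ℂ)) ^ 2 * τ) +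
        (4 * Real.pi * I) * (v - τ) =
        -(4 * Real.pi * I) * ((-(k : ℂ) - 1) * v + (-(k : ℂ) - 1) ^ 2 * τ) := by ring
    rw [this]

private lemma jTheta_shift {τ : ℂ} (hτ : 0 < τ.im) (k : ℤ) (v : ℂ) :
    jTheta (v + 2 * (k : ℂ) * τ) τ =
      Complex.exp (-(4 * Real.pi * I) * ((k : ℂ) * v + (k : ℂ) ^ 2 * τ)) * jTheta v τ :=
  shift_induct (f := fun w => jTheta w τ)
    (fun w => mul_step_helper (τ := τ) (f := fun u => jTheta u τ) w (-1) (Or.inr rfl)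
      (fun u => by beta_reduce; rw [jTheta_add_tau hτ u]; ring)) k v

private lemma thetaFam_shift {τ : ℂ} (hτ : 0 < τ.im) (μ : Fin 3) (k : ℤ) (v : ℂ) :
    thetaFam μ (v + 2 * (k : ℂ) * τ) τ =
      Complex.exp (-(4 * Real.pi * I) * ((k : ℂ) * v + (k : ℂ) ^ 2 * τ)) * thetaFam μ v τ := by
  fin_cases μ
  · exact shift_induct (f := fun w => jTheta1 w τ)
      (fun w => mul_step_helper (τ := τ) (f := fun u => jTheta1 u τ) w 1 (Or.inl rfl)
        (fun u => by beta_reduce; rw [jTheta1_add_tau hτ u]; ring)) k v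
  · exact shift_induct (f := fun w => jTheta2 w τ)
      (fun w => mul_step_helper (τ := τ) (f := fun u => jTheta2 u τ) w (-1) (Or.inr rfl)
        (fun u => by beta_reduce; rw [jTheta2_add_tau hτ u]; ring)) k v
  · exact shift_induct (f := fun w => jTheta3 w τ)
      (fun w => mul_step_helper (τ := τ) (f := fun u => jTheta3 u τ) w 1 (Or.inl rfl)
        (fun u => by beta_reduce; rw [jTheta3_add_tau hτ u]; ring)) k v

private lemma myDivHelper (E A B C D : ℂ) (hE : E ≠ 0) :
    D * (E * A) / (E * B * C) = D * A / (B * C) := by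
  rw [show D * (E * A) = E * (D * A) by ring, show E * B * C = E * (B * C) by ring,
    mul_div_mul_left _ _ hE]
/-- quasi-periodicity `L_λ(t+2τ,τ) = e^{-4πis(t+τ)} L_λ(t,τ)` when each fixed
component satisfies `Σ_j m_{α,j}² = s`. -/
theorem Lfun_periodic_two_tau {ι : Type*} [Fintype ι] {d ℓ : ℕ} (hd : 1 ≤ d) (hl : 1 ≤ ℓ)
    (n : ι → Fin d → ℤ) (m : ι → Fin ℓ → ℤ) (lam : Fin 3)
    (τ : ℂ) (hτ : 0 < τ.im) (s : ℤ)
    (hs : ∀ α : ι, ∑ j : Fin ℓ, (m α j) ^ 2 = s)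
    (t : ℂ)
    (h1 : ∀ (α : ι) (i : Fin d), jTheta ((n α i : ℂ) * t) τ ≠ 0)
    (h2 : ∀ (α : ι) (i : Fin d), jTheta ((n α i : ℂ) * (t + 2 * τ)) τ ≠ 0) :
    Lfun n m lam (t + 2 * τ) τ =
      Complex.exp (-(4 * Real.pi * I * (s : ℂ) * (t + τ))) * Lfun n m lam t τ := by
  classical
  have hJ := jTheta_shift hτ
  have hF := thetaFam_shift hτ
  unfold Lfun
  rw [Finset.mul_sum]
  refine Finset.sum_congr rfl fun α _ => ?_
  have hsum_eq : (∑ μ : Fin 3, ∏ i : Fin d,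
      jThetaDeriv τ * thetaFam μ ((n α i : ℂ) * (t + 2 * τ)) τ /
        (jTheta ((n α i : ℂ) * (t + 2 * τ)) τ * thetaFam μ 0 τ)) =
      ∑ μ : Fin 3, ∏ i : Fin d,
      jThetaDeriv τ * thetaFam μ ((n α i : ℂ) * t) τ /
        (jTheta ((n α i : ℂ) * t) τ * thetaFam μ 0 τ) := by
    refine Finset.sum_congr rfl fun μ _ => Finset.prod_congr rfl fun i _ => ?_
    rw [show ((n α i : ℂ)) * (t + 2 * τ) = (n α i : ℂ) * t + 2 * ((n α i : ℤ) : ℂ) * τ by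
        push_cast; ring,
      hJ (n α i) ((n α i : ℂ) * t), hF μ (n α i) ((n α i : ℂ) * t)]
    exact myDivHelper _ _ _ _ _ (Complex.exp_ne_zero _)
  have hcast : (∑ j : Fin ℓ, ((m α j : ℂ)) ^ 2) = (s : ℂ) := by
    rw [← hs α]
    push_cast
    ring
  have hprod_eq : (∏ j : Fin ℓ, thetaFam lam ((m α j : ℂ) * (t + 2 * τ)) τ / thetaFam lam 0 τ) =
      Complex.exp (-(4 * Real.pi * I * (s : ℂ) * (t + τ))) *
        ∏ j : Fin ℓ, thetaFam lam ((m α j : ℂ) * t) τ / thetaFam lam 0 τ := by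
    have step : ∀ j : Fin ℓ, thetaFam lam ((m α j : ℂ) * (t + 2 * τ)) τ / thetaFam lam 0 τ =
        Complex.exp (-(4 * Real.pi * I) * ((m α j : ℂ) ^ 2 * (t + τ))) *
          (thetaFam lam ((m α j : ℂ) * t) τ / thetaFam lam 0 τ) := by
      intro j
      rw [show ((m α j : ℂ)) * (t + 2 * τ) = (m α j : ℂ) * t + 2 * ((m α j : ℤ) : ℂ) * τ by
          push_cast; ring,
        hF lam (m α j) ((m α j : ℂ) * t), mul_div_assoc]
      congr 2
      ring
    rw [Finset.prod_congr rfl (fun j _ => step j), Finset.prod_mul_distrib, ← Complex.exp_sum]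
    have hsum2 : (∑ j : Fin ℓ, -(4 * (Real.pi : ℂ) * I) * ((m α j : ℂ) ^ 2 * (t + τ))) =
        -(4 * Real.pi * I * (s : ℂ) * (t + τ)) := by
      calc (∑ j : Fin ℓ, -(4 * (Real.pi : ℂ) * I) * ((m α j : ℂ) ^ 2 * (t + τ)))
          = (∑ j : Fin ℓ, ((m α j : ℂ)) ^ 2) * (-(4 * Real.pi * I) * (t + τ)) := by
            rw [Finset.sum_mul]
            exact Finset.sum_congr rfl fun j _ => by ring
        _ = -(4 * Real.pi * I * (s : ℂ) * (t + τ)) := by rw [hcast]; ring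
    rw [hsum2]
  rw [hsum_eq, hprod_eq]
  ring
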